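/- Let I be a nonzero ideal of R such that Iⁿ is isomorphic to co(R) as an R-module for some n ≥ 1. Then the blowup algebra B(I) equals the integral closure R̄. -/

import Mathlib

set_option synthInstance.maxHeartbeats 400000
set_option maxHeartbeats 1000000

open IsLocalRing TensorProduct

/-- The trace ideal of a module: the ideal generated by all values `f m`
for `f : M →ₗ[R] R` and `m : M`. -/
def traceIdeal (R : Type*) [CommRing R] (M : Type*) [AddCommGroup M] [Module R M] :
    Ideal R :=
  ⨆ f : M →ₗ[R] R, LinearMap.range f

/-- The conductor of a Noetherian domain `R`:
`co(R) = {r ∈ R : r · R̄ ⊆ R}`, where `R̄` is the integral closure of `R` in its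
fraction field. -/
noncomputable def conductorIdeal (R : Type*) [CommRing R] [IsDomain R] : Ideal R where
  carrier := {r : R | ∀ x ∈ integralClosure R (FractionRing R),
    algebraMap R (FractionRing R) r * x ∈ (algebraMap R (FractionRing R)).range}
  add_mem' := by
    intro a b ha hb x hx
    rw [map_add, add_mul]
    exact add_mem (ha x hx) (hb x hx)
  zero_mem' := by
    intro x hx
    rw [map_zero, zero_mul]
    exact zero_mem _
  smul_mem' := by
    intro c a ha x hx
    rw [smul_eq_mul, map_mul, mul_assoc]
    exact mul_mem ⟨c, rfl⟩ (ha x hx)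

/-- The image of an ideal `I` of `R` inside the fraction field, as an `R`-submodule. -/
noncomputable def idealImage (R : Type*) [CommRing R] [IsDomain R] (I : Ideal R) :
    Submodule R (FractionRing R) :=
  Submodule.map (Algebra.linearMap R (FractionRing R)) I

/-- The blowup algebra `B(I) = ⋃ₙ (Iⁿ :_K Iⁿ) = {x ∈ K : x·Iⁿ ⊆ Iⁿ for some n}`,
as a subset of the fraction field `K`. -/
noncomputable def blowupSet (R : Type*) [CommRing R] [IsDomain R] (I : Ideal R) :
    Set (FractionRing R) :=
  {x | ∃ n : ℕ, ∀ y ∈ idealImage R (I ^ n), x * y ∈ idealImage R (I ^ n)}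

/-- `b(I) = {r ∈ R : r · B(I) ⊆ R}`, the conductor of the blowup algebra. -/
noncomputable def bSet (R : Type*) [CommRing R] [IsDomain R] (I : Ideal R) : Set R :=
  {r | ∀ x ∈ blowupSet R I,
    algebraMap R (FractionRing R) r * x ∈ (algebraMap R (FractionRing R)).range}

/-- `(W :_K F) = {x ∈ K : x · F ⊆ W}`. -/
def colonSet {K : Type*} [Mul K] (W F : Set K) : Set K := {x | ∀ y ∈ F, x * y ∈ W}

/-- A canonical ideal of a one-dimensional domain `R`: a nonzero ideal `ω` such that
`(ω :_K (ω :_K F)) = F` for every nonzero finitely generated `R`-submodule `F` of the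
fraction field `K` (Herzog–Kunz duality characterization). -/
noncomputable def IsCanonicalIdeal (R : Type*) [CommRing R] [IsDomain R] (ω : Ideal R) :
    Prop :=
  ω ≠ ⊥ ∧ ∀ F : Submodule R (FractionRing R), F.FG → F ≠ ⊥ →
    colonSet (idealImage R ω : Set (FractionRing R))
      (colonSet (idealImage R ω : Set (FractionRing R)) (F : Set (FractionRing R)))
      = (F : Set (FractionRing R))

/-- If `I` is a nonzero ideal of a one-dimensional analytically
unramified Noetherian local domain `R` with `Iⁿ ≅ co(R)` for some `n ≥ 1`, then the
blowup algebra `B(I)` equals the integral closure `R̄`. -/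
theorem stmt2 (R : Type*) [CommRing R] [IsDomain R] [IsNoetherianRing R] [IsLocalRing R]
    (hdim : ringKrullDim R = 1)
    (hur : IsReduced (AdicCompletion (maximalIdeal R) R))
    (I : Ideal R) (hI : I ≠ ⊥)
    (h : ∃ n : ℕ, 1 ≤ n ∧ Nonempty ((↥(I ^ n)) ≃ₗ[R] ↥(conductorIdeal R))) :
    blowupSet R I = (integralClosure R (FractionRing R) : Set (FractionRing R)) := by
  classical
  obtain ⟨n, hn1, ⟨e⟩⟩ := h
  set K := FractionRing R
  set φ := algebraMap R K with hφ
  have hφinj : Function.Injective φ := IsFractionRing.injective R K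
  -- pick a nonzero a ∈ I^n
  obtain ⟨b, hbI, hb0⟩ : ∃ b ∈ I, b ≠ 0 := by
    by_contra! h'
    exact hI ((Submodule.eq_bot_iff I).mpr h')
  have haI : b ^ n ∈ I ^ n := Ideal.pow_mem_pow hbI n
  set a := b ^ n with ha
  have ha0 : a ≠ 0 := pow_ne_zero n hb0
  have hφa0 : φ a ≠ 0 := fun hc => ha0 (hφinj (by simpa using hc))
  set c : K := φ ((e ⟨a, haI⟩ : R)) * (φ a)⁻¹ with hc
  -- key: φ (e ⟨y⟩) = c * φ y
  have key : ∀ y (hy : y ∈ I ^ n), φ ((e ⟨y, hy⟩ : R)) = c * φ y := by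
    intro y hy
    have h1 : a • e ⟨y, hy⟩ = y • e ⟨a, haI⟩ := by
      rw [← map_smul, ← map_smul]
      congr 1
      ext
      simp [smul_eq_mul, mul_comm]
    have h2 : a * (e ⟨y, hy⟩ : R) = y * (e ⟨a, haI⟩ : R) := by
      simpa [Submodule.coe_smul, smul_eq_mul] using congrArg Subtype.val h1
    have h3 : φ a * φ ((e ⟨y, hy⟩ : R)) = φ y * φ ((e ⟨a, haI⟩ : R)) := by
      rw [← map_mul, ← map_mul, h2]
    rw [hc]
    apply mul_left_cancel₀ hφa0
    linear_combination h3 - (φ ((e ⟨a, haI⟩ : R)) * φ y) * (mul_inv_cancel₀ hφa0)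
  have hc0 : c ≠ 0 := by
    intro h0
    have := key a haI
    rw [h0, zero_mul] at this
    have h1 : (e ⟨a, haI⟩ : R) = 0 := hφinj (by simpa using this)
    have h2 : e ⟨a, haI⟩ = 0 := Subtype.ext h1
    have h3 : (⟨a, haI⟩ : ↥(I ^ n)) = 0 := by
      apply e.injective; rw [h2, map_zero]
    exact ha0 (by simpa using congrArg Subtype.val h3)
  ext x
  constructor
  · rintro ⟨m, hm⟩
    -- x stabilizes the nonzero fg submodule idealImage R (I^m)
    refine isIntegral_of_smul_mem_submodule (idealImage R (I ^ m)) ?_ ?_ x ?_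
    · intro hbot
      have hmem : φ (b ^ m) ∈ idealImage R (I ^ m) :=
        ⟨b ^ m, Ideal.pow_mem_pow hbI m, rfl⟩
      rw [hbot] at hmem
      simp only [Submodule.mem_bot] at hmem
      exact pow_ne_zero m hb0 (hφinj (by simpa using hmem))
    · exact Submodule.FG.map _ (IsNoetherian.noetherian (I ^ m))
    · intro y hy
      simpa [smul_eq_mul] using hm y hy
  · intro hx
    refine ⟨n, fun w hw => ?_⟩
    obtain ⟨y, hy, rfl⟩ := hw
    -- e ⟨y⟩ ∈ conductor, so x * φ (e ⟨y⟩) ∈ range φ, say = φ s with s ∈ conductor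
    have hey : (e ⟨y, hy⟩ : R) ∈ conductorIdeal R := (e ⟨y, hy⟩).2
    obtain ⟨s, hs⟩ := hey x hx
    have hsco : s ∈ conductorIdeal R := by
      intro z hz
      have : φ s * z = φ ((e ⟨y, hy⟩ : R)) * (x * z) := by
        rw [hs]; ring
      rw [this]
      exact hey (x * z) (mul_mem hx hz)
    obtain ⟨t, ht⟩ := e.surjective ⟨s, hsco⟩
    have hts : (e t : R) = s := by rw [ht]
    obtain ⟨z, hz⟩ := t
    have h4 : φ s = c * φ z := by rw [← hts, key z hz]
    have h5 : x * (Algebra.linearMap R K) y = φ z := by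
      have hy' : φ ((e ⟨y, hy⟩ : R)) = c * φ y := key y hy
      have : φ ((e ⟨y, hy⟩ : R)) * x = c * φ z := by rw [← hs, h4]
      rw [hy'] at this
      have h6 : c * (φ y * x) = c * φ z := by linear_combination this
      have := mul_left_cancel₀ hc0 h6
      simpa [Algebra.linearMap_apply, mul_comm] using this
    rw [h5]
    exact ⟨z, hz, rfl⟩
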